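/- arXiv:2109.09728 — 2 statements merged into one kernel-verified Lean document; each statement's English description precedes it below -/
import Mathlib

section
/- Let α₁, α₂, α₃ ∈ ℝ with α₁α₂ + α₂α₃ + α₃α₁ ≥ 0, and let A = Circ(α₁, α₂, α₃) be the 3×3 circulant matrix with first row (α₁, α₂, α₃). Then the spectral norm of A equals |α₁ + α₂ + α₃|. -/
open scoped BigOperators ENNReal

/-- The `ℓ^p` norm of a vector in `ℝⁿ`, for `p ∈ [1, ∞]`. -/
noncomputable def vecPNorm {n : ℕ} (p : ℝ≥0∞) (x : Fin n → ℝ) : ℝ :=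
  if p = ∞ then ⨆ i, |x i| else (∑ i, |x i| ^ p.toReal) ^ (1 / p.toReal)

/-- The operator norm of a matrix acting on `(ℝⁿ, ‖·‖_p)`,
    i.e. `sup_{x ≠ 0} ‖Ax‖_p / ‖x‖_p`. -/
noncomputable def matPNorm {n : ℕ} (p : ℝ≥0∞) (A : Matrix (Fin n) (Fin n) ℝ) : ℝ :=
  sSup {r : ℝ | ∃ x : Fin n → ℝ, x ≠ 0 ∧ r = vecPNorm p (A.mulVec x) / vecPNorm p x}

/-- The circulant matrix `A(n, a, b)` with `a` on the diagonal and `b` elsewhere. -/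
def circA (n : ℕ) (a b : ℝ) : Matrix (Fin n) (Fin n) ℝ :=
  Matrix.of fun i j => if i = j then a else b

lemma vecPNorm_two {n : ℕ} (x : Fin n → ℝ) :
    vecPNorm 2 x = Real.sqrt (∑ i, (x i)^2) := by
  have h2 : ((2:ℝ≥0∞)).toReal = (2:ℝ) := by simp
  simp only [vecPNorm, if_neg (by norm_num : (2:ℝ≥0∞) ≠ ∞), h2]
  rw [Real.sqrt_eq_rpow]
  congr 1
  refine Finset.sum_congr rfl fun i _ => ?_
  rw [show (2:ℝ) = ((2:ℕ):ℝ) by norm_num, Real.rpow_natCast, sq_abs]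

lemma sum_sq_pos {n : ℕ} {x : Fin n → ℝ} (hx : x ≠ 0) : 0 < ∑ i, (x i)^2 := by
  obtain ⟨i, hi⟩ := Function.ne_iff.mp hx
  have hi' : x i ≠ 0 := hi
  calc (0:ℝ) < (x i)^2 := pow_two_pos_of_ne_zero hi'
    _ ≤ ∑ j, (x j)^2 :=
      Finset.single_le_sum (f := fun j => (x j)^2) (fun j _ => sq_nonneg _) (Finset.mem_univ i)

theorem stmt_8 (α₁ α₂ α₃ : ℝ) (h : 0 ≤ α₁ * α₂ + α₂ * α₃ + α₃ * α₁) :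
    matPNorm 2 !![α₁, α₂, α₃; α₃, α₁, α₂; α₂, α₃, α₁] = |α₁ + α₂ + α₃| := by
  set A : Matrix (Fin 3) (Fin 3) ℝ := !![α₁, α₂, α₃; α₃, α₁, α₂; α₂, α₃, α₁] with hA
  set s : ℝ := α₁ + α₂ + α₃ with hs
  set S : Set ℝ := {r : ℝ | ∃ x : Fin 3 → ℝ, x ≠ 0 ∧ r = vecPNorm 2 (A.mulVec x) / vecPNorm 2 x}
    with hS
  have hmem : |s| ∈ S := by
    refine ⟨![1,1,1], ?_, ?_⟩
    · intro hc
      have := congrFun hc 0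
      simp at this
    · have hmv : A.mulVec ![1,1,1] = ![α₁+α₂+α₃, α₃+α₁+α₂, α₂+α₃+α₁] := by
        funext i
        fin_cases i <;>
          simp [hA, Matrix.mulVec, dotProduct, Fin.sum_univ_three, mul_one]
      rw [hmv, vecPNorm_two, vecPNorm_two, Fin.sum_univ_three, Fin.sum_univ_three]
      have e1 : (α₁+α₂+α₃)^2 + (α₃+α₁+α₂)^2 + (α₂+α₃+α₁)^2 = 3 * s^2 := by ring
      have e2 : (![1,1,1] : Fin 3 → ℝ) 0 = 1 := rfl
      simp only [Matrix.cons_val_zero, Matrix.cons_val_one, Matrix.head_cons,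
        Matrix.cons_val_two, Matrix.tail_cons]
      rw [e1]
      rw [Real.sqrt_mul (by norm_num : (0:ℝ) ≤ 3), Real.sqrt_sq_eq_abs]
      have : (1:ℝ)^2 + 1^2 + 1^2 = 3 := by norm_num
      rw [this]
      field_simp
  have hub : ∀ r ∈ S, r ≤ |s| := by
    rintro r ⟨x, hx, rfl⟩
    have hpos : 0 < Real.sqrt (∑ i, (x i)^2) := Real.sqrt_pos.mpr (sum_sq_pos hx)
    rw [vecPNorm_two, vecPNorm_two, div_le_iff₀ hpos]
    have hkey : ∑ i, (A.mulVec x i)^2 ≤ s^2 * ∑ i, (x i)^2 := by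
      have hmv : ∀ i, A.mulVec x i = ∑ j, A i j * x j := fun i => rfl
      rw [Fin.sum_univ_three, Fin.sum_univ_three, hmv, hmv, hmv]
      simp only [hA, Fin.sum_univ_three, Matrix.cons_val', Matrix.cons_val_zero,
        Matrix.cons_val_one, Matrix.head_cons, Matrix.empty_val', Matrix.cons_val_fin_one,
        Matrix.head_fin_const, Matrix.cons_val_two, Matrix.tail_cons, Matrix.of_apply]
      rw [hs]
      nlinarith [mul_nonneg h (sq_nonneg (x 0 - x 1)), mul_nonneg h (sq_nonneg (x 1 - x 2)),
        mul_nonneg h (sq_nonneg (x 2 - x 0))]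
    calc Real.sqrt (∑ i, (A.mulVec x i)^2)
        ≤ Real.sqrt (s^2 * ∑ i, (x i)^2) := Real.sqrt_le_sqrt hkey
      _ = |s| * Real.sqrt (∑ i, (x i)^2) := by
          rw [Real.sqrt_mul (sq_nonneg s), Real.sqrt_sq_eq_abs]
  rw [show matPNorm 2 A = sSup S from rfl]
  exact le_antisymm (csSup_le ⟨|s|, hmem⟩ hub) (le_csSup ⟨|s|, hub⟩ hmem)
end

section
/- Let a, b ≥ 0 with (n−2)b ≤ 2a, and let A = A(n,-a,b) be the n×n matrix with -a on the diagonal and b elsewhere. For 2 ≤ p ≤ ∞, the induced p-norm of A satisfies a + b ≤ ‖A‖_p ≤ (a+b)^{2/p}·((n−1)b+a)^{1−2/p}. -/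
open scoped BigOperators ENNReal

open Finset

lemma mulVec_circA (n : ℕ) (a b : ℝ) (x : Fin n → ℝ) (i : Fin n) :
    (circA n (-a) b).mulVec x i = b * (∑ j, x j) - (a + b) * x i := by
  unfold circA Matrix.mulVec
  simp only [Matrix.of_apply, dotProduct]
  have : ∀ j, (if i = j then -a else b) * x j
      = b * x j + (if j = i then (-(a+b)) * x j else 0) := by
    intro j
    by_cases h : j = i
    · subst h; simp; ring
    · have : ¬ i = j := fun hh => h hh.symm
      simp [h, this]
  rw [Finset.sum_congr rfl (fun j _ => this j), Finset.sum_add_distrib,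
    Finset.sum_ite_eq' univ i (fun j => (-(a+b)) * x j)]
  simp [Finset.mul_sum]
  ring

lemma rowsum_circA (n : ℕ) (hn : 1 ≤ n) (a b : ℝ) (ha : 0 ≤ a) (hb : 0 ≤ b) (i : Fin n) :
    ∑ j, |circA n (-a) b i j| = a + ((n : ℝ) - 1) * b := by
  unfold circA
  have : ∀ j : Fin n, |(Matrix.of fun i j => if i = j then -a else b) i j|
      = b + (if j = i then a - b else 0) := by
    intro j
    by_cases h : j = i
    · subst h; simp [abs_of_nonneg ha]
    · have : ¬ i = j := fun hh => h hh.symm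
      simp [h, this, abs_of_nonneg hb]
  rw [Finset.sum_congr rfl (fun j _ => this j), Finset.sum_add_distrib,
    Finset.sum_ite_eq' univ i (fun _ => a - b)]
  simp [Finset.card_univ]
  ring

lemma l2_bound (n : ℕ) (a b : ℝ) (hb : 0 ≤ b) (hcase : ((n : ℝ) - 2) * b ≤ 2 * a)
    (x : Fin n → ℝ) :
    ∑ i, ((circA n (-a) b).mulVec x i) ^ 2 ≤ (a + b) ^ 2 * ∑ j, (x j) ^ 2 := by
  have h1 : ∀ i, ((circA n (-a) b).mulVec x i) ^ 2
      = (b * (∑ j, x j)) ^ 2 - 2 * (b * (∑ j, x j)) * ((a+b) * x i) + (a+b)^2 * (x i)^2 := by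
    intro i; rw [mulVec_circA]; ring
  rw [Finset.sum_congr rfl (fun i _ => h1 i)]
  rw [Finset.sum_add_distrib, Finset.sum_sub_distrib, Finset.sum_const, ← Finset.mul_sum,
    ← Finset.mul_sum]
  simp only [Finset.card_univ, Fintype.card_fin, nsmul_eq_mul]
  have hS : (n : ℝ) * b - 2 * (a + b) ≤ 0 := by push_cast at hcase ⊢; nlinarith
  rw [← Finset.mul_sum]
  nlinarith [mul_nonpos_of_nonpos_of_nonneg hS (mul_nonneg hb (sq_nonneg (∑ j, x j)))]

lemma l2_bound_C (n : ℕ) (a b : ℝ) (hb : 0 ≤ b) (hcase : ((n : ℝ) - 2) * b ≤ 2 * a)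
    (U : Fin n → ℂ) :
    ∑ i, ‖∑ j, ((circA n (-a) b) i j : ℂ) * U j‖ ^ 2
      ≤ (a + b) ^ 2 * ∑ j, ‖U j‖ ^ 2 := by
  have key : ∀ i, ‖∑ j, ((circA n (-a) b) i j : ℂ) * U j‖ ^ 2
      = ((circA n (-a) b).mulVec (fun j => (U j).re) i) ^ 2
        + ((circA n (-a) b).mulVec (fun j => (U j).im) i) ^ 2 := by
    intro i
    rw [Complex.sq_norm, Complex.normSq_apply, Complex.re_sum, Complex.im_sum]
    have h1 : (∑ j, (((circA n (-a) b) i j : ℂ) * U j).re)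
        = (circA n (-a) b).mulVec (fun j => (U j).re) i := by
      simp [Matrix.mulVec, dotProduct, Complex.mul_re]
    have h2 : (∑ j, (((circA n (-a) b) i j : ℂ) * U j).im)
        = (circA n (-a) b).mulVec (fun j => (U j).im) i := by
      simp [Matrix.mulVec, dotProduct, Complex.mul_im]
    rw [h1, h2]; ring
  have habs : ∀ j, ‖U j‖ ^ 2 = (U j).re ^ 2 + (U j).im ^ 2 := by
    intro j; rw [Complex.sq_norm, Complex.normSq_apply]; ring
  rw [Finset.sum_congr rfl (fun i _ => key i), Finset.sum_congr rfl (fun j _ => habs j),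
    Finset.sum_add_distrib, Finset.sum_add_distrib, mul_add]
  exact add_le_add (l2_bound n a b hb hcase _) (l2_bound n a b hb hcase _)

lemma row_bound_C (n : ℕ) (hn : 1 ≤ n) (a b : ℝ) (ha : 0 ≤ a) (hb : 0 ≤ b)
    (U : Fin n → ℂ) (hU : ∀ j, ‖U j‖ ≤ 1) (i : Fin n) :
    ‖∑ j, ((circA n (-a) b) i j : ℂ) * U j‖ ≤ a + ((n : ℝ) - 1) * b := by
  calc ‖∑ j, ((circA n (-a) b) i j : ℂ) * U j‖
      ≤ ∑ j, ‖((circA n (-a) b) i j : ℂ) * U j‖ := by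
        exact norm_sum_le _ _
    _ ≤ ∑ j, |(circA n (-a) b) i j| := by
        apply Finset.sum_le_sum
        intro j _
        rw [norm_mul, Complex.norm_real, Real.norm_eq_abs]
        exact mul_le_of_le_one_right (abs_nonneg _) (hU j)
    _ = a + ((n : ℝ) - 1) * b := rowsum_circA n hn a b ha hb i

noncomputable def glyph (e t : ℝ) (z : ℂ) : ℂ :=
  if t = 0 then 0 else ((|t| : ℝ) : ℂ) ^ (((e : ℝ) : ℂ) * z) * ((t / |t| : ℝ) : ℂ)

lemma glyph_abs_of_ne {t : ℝ} (h : t ≠ 0) (e : ℝ) (z : ℂ) :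
    ‖glyph e t z‖ = |t| ^ (e * z.re) := by
  have h1 : (0:ℝ) < |t| := abs_pos.mpr h
  unfold glyph
  rw [if_neg h, norm_mul, Complex.norm_cpow_eq_rpow_re_of_pos h1, Complex.norm_real, Real.norm_eq_abs,
    abs_div, abs_abs, div_self (ne_of_gt h1), mul_one]
  congr 1
  simp [Complex.mul_re]

lemma glyph_abs_le_one {t : ℝ} (ht : |t| ≤ 1) {e : ℝ} {z : ℂ} (hez : 0 ≤ e * z.re) :
    ‖glyph e t z‖ ≤ 1 := by
  by_cases h : t = 0
  · simp [glyph, h]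
  · rw [glyph_abs_of_ne h]
    exact Real.rpow_le_one (abs_nonneg t) ht hez

lemma glyph_diff (e t : ℝ) : Differentiable ℂ (glyph e t) := by
  by_cases h : t = 0
  · have : glyph e t = fun _ => (0:ℂ) := by funext z; simp [glyph, h]
    rw [this]; exact differentiable_const 0
  · have : glyph e t = fun z => ((|t| : ℝ) : ℂ) ^ (((e : ℝ) : ℂ) * z) * ((t / |t| : ℝ) : ℂ) := by
      funext z; simp [glyph, h]
    rw [this]
    apply Differentiable.mul_const
    apply Differentiable.const_cpow
    · exact (differentiable_const _).mul differentiable_id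
    · left
      simp only [ne_eq, Complex.ofReal_eq_zero]
      exact abs_ne_zero.mpr h

lemma glyph_val {e : ℝ} {z : ℂ} (h : ((e : ℝ) : ℂ) * z = 1) (t : ℝ) : glyph e t z = (t : ℂ) := by
  by_cases ht : t = 0
  · simp [glyph, ht]
  · rw [glyph, if_neg ht, h, Complex.cpow_one, ← Complex.ofReal_mul]
    congr 1
    field_simp

lemma glyph_abs_eq (e t : ℝ) {z : ℂ} {c : ℝ} (h : e * z.re = c) (hc : c ≠ 0) :
    ‖glyph e t z‖ = |t| ^ c := by
  by_cases ht : t = 0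
  · simp [glyph, ht, Real.zero_rpow hc]
  · rw [glyph_abs_of_ne ht, h]

lemma glyph_sq_abs (e t : ℝ) {z : ℂ} {c : ℝ} (h : e * z.re + e * z.re = c) (hc : c ≠ 0) :
    ‖glyph e t z‖ ^ 2 = |t| ^ c := by
  by_cases ht : t = 0
  · simp [glyph, ht, Real.zero_rpow hc]
  · rw [glyph_abs_of_ne ht, sq, ← Real.rpow_add (abs_pos.mpr ht), h]

lemma rpow_le_one' {t e : ℝ} (ht : 0 ≤ t) (he : 0 < e) (h : t ^ e ≤ 1) : t ≤ 1 := by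
  by_contra hc
  push_neg at hc
  have h1 : (1:ℝ) < t ^ e :=
    (Real.one_lt_rpow_iff (le_of_lt (lt_trans zero_lt_one hc))).mpr (Or.inl ⟨hc, he⟩)
  linarith

lemma interp_bound (n : ℕ) (hn : 1 ≤ n) (a b : ℝ) (ha : 0 ≤ a) (hb : 0 ≤ b)
    (hcase : ((n : ℝ) - 2) * b ≤ 2 * a) (pr : ℝ) (hpr : 2 ≤ pr)
    (u : Fin n → ℝ) (hu : ∑ j, |u j| ^ pr = 1) :
    (∑ i, |(circA n (-a) b).mulVec u i| ^ pr) ^ (1 / pr)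
      ≤ (a + b) ^ (2 / pr) * (a + ((n : ℝ) - 1) * b) ^ (1 - 2 / pr) := by
  have hpr0 : (0:ℝ) < pr := by linarith
  have hpr1 : (0:ℝ) < pr - 1 := by linarith
  set β := a + b with hβdef
  set M := a + ((n:ℝ) - 1) * b with hMdef
  have hβ : 0 ≤ β := by positivity
  have hM : 0 ≤ M := by
    have h1 : (1:ℝ) ≤ (n:ℝ) := by exact_mod_cast hn
    nlinarith
  set w := (circA n (-a) b).mulVec u with hwdef
  set s := ∑ i, |w i| ^ pr with hsdef
  have hs0 : 0 ≤ s := Finset.sum_nonneg fun i _ => Real.rpow_nonneg (abs_nonneg _) _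
  by_cases hs : s = 0
  · rw [hs, Real.zero_rpow (by positivity)]
    positivity
  have hspos : 0 < s := lt_of_le_of_ne hs0 (Ne.symm hs)
  set W := s ^ (1/pr) with hWdef
  have hW : 0 < W := Real.rpow_pos_of_pos hspos _
  have hWp : W ^ pr = s := by
    rw [hWdef, ← Real.rpow_mul hs0, one_div, inv_mul_cancel₀ (ne_of_gt hpr0), Real.rpow_one]
  set q := pr / (pr - 1) with hqdef
  have hq0 : 0 < q := div_pos hpr0 hpr1
  have hqpr : (pr - 1) * q = pr := by rw [hqdef]; field_simp
  set v : Fin n → ℝ := fun i => w i * |w i| ^ (pr - 2) / W ^ (pr - 1) with hvdef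
  have habsv : ∀ i, |v i| = |w i| ^ (pr - 1) / W ^ (pr - 1) := by
    intro i
    rw [hvdef]
    rw [abs_div, abs_mul, abs_of_nonneg (Real.rpow_nonneg (abs_nonneg (w i)) _),
      abs_of_nonneg (Real.rpow_nonneg hW.le _)]
    congr 1
    by_cases h : w i = 0
    · rw [h]
      simp [Real.zero_rpow (ne_of_gt hpr1)]
    · have hwp : 0 < |w i| := abs_pos.mpr h
      calc |w i| * |w i| ^ (pr - 2) = |w i| ^ (1:ℝ) * |w i| ^ (pr - 2) := by rw [Real.rpow_one]
        _ = |w i| ^ (pr - 1) := by rw [← Real.rpow_add hwp]; ring_nf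
  have hvq : ∑ i, |v i| ^ q = 1 := by
    have h1 : ∀ i, |v i| ^ q = |w i| ^ pr / s := by
      intro i
      rw [habsv, Real.div_rpow (Real.rpow_nonneg (abs_nonneg _) _) (Real.rpow_nonneg hW.le _),
        ← Real.rpow_mul (abs_nonneg _), ← Real.rpow_mul hW.le, hqpr, hWp]
    rw [Finset.sum_congr rfl fun i _ => h1 i, ← Finset.sum_div, ← hsdef]
    exact div_self hs
  have hvw : ∑ i, v i * w i = W := by
    have h1 : ∀ i, v i * w i = |w i| ^ pr / W ^ (pr - 1) := by
      intro i
      rw [hvdef]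
      by_cases h : w i = 0
      · rw [h]
        simp [Real.zero_rpow (ne_of_gt hpr0)]
      · have hwp : 0 < |w i| := abs_pos.mpr h
        have h2 : w i * w i = |w i| ^ (2:ℝ) := by
          rw [show ((2:ℝ) = ((2:ℕ):ℝ)) from by norm_num, Real.rpow_natCast, sq_abs, sq]
        calc w i * |w i| ^ (pr-2) / W ^ (pr-1) * w i
            = (w i * w i) * |w i| ^ (pr-2) / W ^ (pr-1) := by ring
          _ = |w i| ^ pr / W ^ (pr-1) := by
              rw [h2, ← Real.rpow_add hwp]; norm_num
    rw [Finset.sum_congr rfl fun i _ => h1 i, ← Finset.sum_div, ← hsdef, ← hWp,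
      ← Real.rpow_sub hW]
    norm_num
  have hu1 : ∀ j, |u j| ≤ 1 := by
    intro j
    have h1 : |u j| ^ pr ≤ 1 := by
      rw [← hu]
      exact Finset.single_le_sum (f := fun j => |u j| ^ pr)
        (fun i _ => Real.rpow_nonneg (abs_nonneg _) _) (mem_univ j)
    exact rpow_le_one' (abs_nonneg _) hpr0 h1
  have hv1 : ∀ i, |v i| ≤ 1 := by
    intro i
    have h1 : |v i| ^ q ≤ 1 := by
      rw [← hvq]
      exact Finset.single_le_sum (f := fun i => |v i| ^ q)
        (fun i _ => Real.rpow_nonneg (abs_nonneg _) _) (mem_univ i)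
    exact rpow_le_one' (abs_nonneg _) hq0 h1
  -- complex functions
  set U : Fin n → ℂ → ℂ := fun j z => glyph (pr/2) (u j) (1 - z) with hUdef
  set V : Fin n → ℂ → ℂ := fun i z => glyph (q/2) (v i) (1 + z) with hVdef
  set g : ℂ → Fin n → ℂ := fun z i => ∑ j, ((circA n (-a) b) i j : ℂ) * U j z with hgdef
  set f : ℂ → ℂ := fun z => ∑ i, V i z * g z i with hfdef
  have hUle : ∀ j (z:ℂ), z.re ≤ 1 → ‖U j z‖ ≤ 1 := by
    intro j z hz
    apply glyph_abs_le_one (hu1 j)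
    have h1 : (1 - z).re = 1 - z.re := by simp
    rw [h1]
    have h2 : (0:ℝ) ≤ 1 - z.re := by linarith
    exact mul_nonneg (by linarith) h2
  have hVle : ∀ i (z:ℂ), 0 ≤ z.re → ‖V i z‖ ≤ 1 := by
    intro i z hz
    apply glyph_abs_le_one (hv1 i)
    have h1 : (1 + z).re = 1 + z.re := by simp
    rw [h1]
    have h2 : (0:ℝ) ≤ 1 + z.re := by linarith
    exact mul_nonneg (by linarith) h2
  have hgM : ∀ (z:ℂ), z.re ≤ 1 → ∀ i, ‖g z i‖ ≤ M := by
    intro z hz i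
    exact row_bound_C n hn a b ha hb _ (fun j => hUle j z hz) i
  have habsf : ∀ (z:ℂ), ‖f z‖
      ≤ ∑ i, ‖V i z‖ * ‖g z i‖ := by
    intro z
    calc ‖f z‖ ≤ ∑ i, ‖V i z * g z i‖ := norm_sum_le _ _
      _ = ∑ i, ‖V i z‖ * ‖g z i‖ := by simp [map_mul]
  have hedge0 : ∀ (z:ℂ), z.re = 0 → ‖f z‖ ≤ β := by
    intro z hz
    refine le_trans (habsf z) ?_
    have hVsq : ∑ i, ‖V i z‖ ^ 2 = 1 := by
      have h1 : ∀ i, ‖V i z‖ ^ 2 = |v i| ^ q := by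
        intro i
        exact glyph_sq_abs _ _ (by simp [Complex.add_re, Complex.one_re, hz])
          (ne_of_gt hq0)
      rw [Finset.sum_congr rfl fun i _ => h1 i, hvq]
    have hgsq : ∑ i, ‖g z i‖ ^ 2 ≤ β ^ 2 := by
      have hUsq : ∑ j, ‖U j z‖ ^ 2 = 1 := by
        have h1 : ∀ j, ‖U j z‖ ^ 2 = |u j| ^ pr := by
          intro j
          exact glyph_sq_abs _ _ (by simp [Complex.sub_re, Complex.one_re, hz])
            (ne_of_gt hpr0)
        rw [Finset.sum_congr rfl fun j _ => h1 j, hu]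
      have h2 := l2_bound_C n a b hb hcase (fun j => U j z)
      calc ∑ i, ‖g z i‖ ^ 2
          ≤ β ^ 2 * ∑ j, ‖U j z‖ ^ 2 := h2
        _ = β ^ 2 := by rw [hUsq, mul_one]
    have hcs := Finset.sum_mul_sq_le_sq_mul_sq univ (fun i => ‖V i z‖)
      (fun i => ‖g z i‖)
    have h1 : (∑ i, ‖V i z‖ * ‖g z i‖) ^ 2 ≤ β ^ 2 := by
      calc (∑ i, ‖V i z‖ * ‖g z i‖) ^ 2
          ≤ (∑ i, ‖V i z‖ ^ 2) * ∑ i, ‖g z i‖ ^ 2 := hcs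
        _ = ∑ i, ‖g z i‖ ^ 2 := by rw [hVsq, one_mul]
        _ ≤ β ^ 2 := hgsq
    have h2 : 0 ≤ ∑ i, ‖V i z‖ * ‖g z i‖ :=
      Finset.sum_nonneg fun i _ => mul_nonneg (norm_nonneg _) (norm_nonneg _)
    nlinarith
  have hedge1 : ∀ (z:ℂ), z.re = 1 → ‖f z‖ ≤ M := by
    intro z hz
    refine le_trans (habsf z) ?_
    have h1 : ∀ i, ‖V i z‖ * ‖g z i‖ ≤ |v i| ^ q * M := by
      intro i
      have hVeq : ‖V i z‖ = |v i| ^ q :=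
        glyph_abs_eq _ _ (by simp [Complex.add_re, Complex.one_re, hz]; ring) (ne_of_gt hq0)
      rw [hVeq]
      exact mul_le_mul_of_nonneg_left (hgM z (le_of_eq hz) i)
        (Real.rpow_nonneg (abs_nonneg _) _)
    calc ∑ i, ‖V i z‖ * ‖g z i‖
        ≤ ∑ i, |v i| ^ q * M := Finset.sum_le_sum fun i _ => h1 i
      _ = M := by rw [← Finset.sum_mul, hvq, one_mul]
  have hdiff : Differentiable ℂ f := by
    have hU' : ∀ j, Differentiable ℂ (fun z => U j z) :=
      fun j => (glyph_diff (pr/2) (u j)).comp ((differentiable_const (1:ℂ)).sub differentiable_id)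
    have hV' : ∀ i, Differentiable ℂ (fun z => V i z) :=
      fun i => (glyph_diff (q/2) (v i)).comp ((differentiable_const (1:ℂ)).add differentiable_id)
    have hg' : ∀ i, Differentiable ℂ (fun z => g z i) := by
      intro i
      apply Differentiable.fun_sum
      intro j _
      exact (differentiable_const _).mul (hU' j)
    apply Differentiable.fun_sum
    intro i _
    exact (hV' i).mul (hg' i)
  have hbdd : BddAbove ((norm ∘ f) '' (Complex.HadamardThreeLines.verticalClosedStrip 0 1)) := by
    refine ⟨(n:ℝ) * M, ?_⟩
    rintro r ⟨z, hz, rfl⟩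
    simp only [Function.comp_apply]
    have hz' : z.re ∈ Set.Icc (0:ℝ) 1 := hz
    refine le_trans (habsf z) ?_
    calc ∑ i, ‖V i z‖ * ‖g z i‖
        ≤ ∑ _i : Fin n, 1 * M := Finset.sum_le_sum fun i _ =>
          mul_le_mul (hVle i z hz'.1) (hgM z hz'.2 i) (norm_nonneg _) zero_le_one
      _ = (n:ℝ) * M := by simp [Finset.card_univ]
  set θ : ℝ := 1 - 2/pr with hθdef
  have h2pr : 2/pr ≤ 1 := by rw [div_le_one hpr0]; linarith
  have h2pr0 : 0 < 2/pr := by positivity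
  have hθ0 : 0 ≤ θ := by rw [hθdef]; linarith
  have hθ1 : θ ≤ 1 := by rw [hθdef]; linarith
  have hfθ : f ((θ:ℝ):ℂ) = (W:ℂ) := by
    have hUθ : ∀ j, U j ((θ:ℝ):ℂ) = (u j : ℂ) := by
      intro j
      apply glyph_val
      have h1 : ((pr/2 : ℝ):ℂ) * (1 - ((θ:ℝ):ℂ)) = (((pr/2) * (2/pr) : ℝ) : ℂ) := by
        rw [hθdef]; push_cast; ring
      rw [h1, show (pr/2) * (2/pr) = 1 from by field_simp, Complex.ofReal_one]
    have hVθ : ∀ i, V i ((θ:ℝ):ℂ) = (v i : ℂ) := by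
      intro i
      apply glyph_val
      have h1 : ((q/2 : ℝ):ℂ) * (1 + ((θ:ℝ):ℂ)) = (((q/2) * (2 - 2/pr) : ℝ) : ℂ) := by
        rw [hθdef]; push_cast; ring
      rw [h1, show (q/2) * (2 - 2/pr) = 1 from by rw [hqdef]; field_simp,
        Complex.ofReal_one]
    have hgθ : ∀ i, g ((θ:ℝ):ℂ) i = ((w i : ℝ) : ℂ) := by
      intro i
      rw [hgdef]
      simp only [hUθ]
      rw [hwdef]
      simp [Matrix.mulVec, dotProduct]
    rw [hfdef]
    simp only [hVθ, hgθ]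
    rw [← hvw]
    push_cast
    rfl
  have hz : ((θ:ℝ):ℂ) ∈ Complex.HadamardThreeLines.verticalClosedStrip 0 1 := by
    simp only [Complex.HadamardThreeLines.verticalClosedStrip, Set.mem_preimage,
      Complex.ofReal_re, Set.mem_Icc]
    exact ⟨hθ0, hθ1⟩
  have happ := Complex.HadamardThreeLines.norm_le_interp_of_mem_verticalClosedStrip₀₁' f
    hz hdiff.diffContOnCl hbdd
    (fun z hz => by
      exact hedge0 z (Set.mem_singleton_iff.mp hz))
    (fun z hz => by
      exact hedge1 z (Set.mem_singleton_iff.mp hz))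
  rw [hfθ, Complex.norm_real, Real.norm_eq_abs, abs_of_pos hW, Complex.ofReal_re] at happ
  have h1 : 1 - θ = 2/pr := by rw [hθdef]; ring
  rwa [h1] at happ

lemma vecPNorm_nonneg {n : ℕ} (p : ℝ≥0∞) (x : Fin n → ℝ) : 0 ≤ vecPNorm p x := by
  unfold vecPNorm
  split
  · exact Real.iSup_nonneg fun i => abs_nonneg _
  · exact Real.rpow_nonneg
      (Finset.sum_nonneg fun i _ => Real.rpow_nonneg (abs_nonneg _) _) _

lemma vecPNorm_pos {n : ℕ} {p : ℝ≥0∞} (hp : 2 ≤ p) {x : Fin n → ℝ} (hx : x ≠ 0) :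
    0 < vecPNorm p x := by
  obtain ⟨i, hi⟩ : ∃ i, x i ≠ 0 := by
    by_contra h
    push_neg at h
    exact hx (funext h)
  unfold vecPNorm
  split
  case isTrue h =>
    exact lt_of_lt_of_le (abs_pos.mpr hi)
      (le_ciSup (f := fun j => |x j|) (Finite.bddAbove_range _) i)
  case isFalse h =>
    have hp0 : p ≠ 0 := by
      intro h0
      rw [h0] at hp
      simp at hp
    have hpr : 0 < p.toReal := ENNReal.toReal_pos hp0 h
    apply Real.rpow_pos_of_pos
    exact lt_of_lt_of_le (Real.rpow_pos_of_pos (abs_pos.mpr hi) p.toReal)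
      (Finset.single_le_sum (f := fun j => |x j| ^ p.toReal)
        (fun j _ => Real.rpow_nonneg (abs_nonneg _) _) (mem_univ i))

lemma vecPNorm_smul {n : ℕ} {p : ℝ≥0∞} (hp : 2 ≤ p) (c : ℝ) (x : Fin n → ℝ) :
    vecPNorm p (c • x) = |c| * vecPNorm p x := by
  unfold vecPNorm
  split
  · rw [Real.mul_iSup_of_nonneg (abs_nonneg c)]
    simp [abs_mul]
  case isFalse h =>
    have hp0 : p ≠ 0 := by
      intro h0
      rw [h0] at hp
      simp at hp
    have hpr : 0 < p.toReal := ENNReal.toReal_pos hp0 h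
    have h1 : ∀ j, |(c • x) j| ^ p.toReal = |c| ^ p.toReal * |x j| ^ p.toReal := by
      intro j
      rw [Pi.smul_apply, smul_eq_mul, abs_mul,
        Real.mul_rpow (abs_nonneg _) (abs_nonneg _)]
    rw [Finset.sum_congr rfl fun j _ => h1 j, ← Finset.mul_sum,
      Real.mul_rpow (Real.rpow_nonneg (abs_nonneg _) _)
        (Finset.sum_nonneg fun i _ => Real.rpow_nonneg (abs_nonneg _) _),
      ← Real.rpow_mul (abs_nonneg c), mul_one_div, div_self (ne_of_gt hpr),
      Real.rpow_one]

lemma main_est (n : ℕ) (hn : 2 ≤ n) (a b : ℝ) (ha : 0 ≤ a) (hb : 0 ≤ b)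
    (hcase : ((n : ℝ) - 2) * b ≤ 2 * a) (p : ℝ≥0∞) (hp : 2 ≤ p) (x : Fin n → ℝ) :
    vecPNorm p ((circA n (-a) b).mulVec x)
      ≤ ((a + b) ^ (2 / p.toReal) * (((n : ℝ) - 1) * b + a) ^ (1 - 2 / p.toReal))
        * vecPNorm p x := by
  have hn1 : 1 ≤ n := le_trans (by norm_num) hn
  haveI : Nonempty (Fin n) := ⟨⟨0, by omega⟩⟩
  have hM0 : 0 ≤ ((n : ℝ) - 1) * b + a := by
    have h1 : (1:ℝ) ≤ (n:ℝ) := by exact_mod_cast hn1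
    nlinarith
  by_cases hpi : p = ∞
  · subst hpi
    rw [show ((∞ : ℝ≥0∞).toReal) = 0 from rfl]
    norm_num
    unfold vecPNorm
    rw [if_pos rfl, if_pos rfl]
    set N := ⨆ j, |x j| with hN
    have hN0 : 0 ≤ N := Real.iSup_nonneg fun i => abs_nonneg _
    apply ciSup_le
    intro i
    have e : (circA n (-a) b).mulVec x i = ∑ j, circA n (-a) b i j * x j := rfl
    have h1 : |(circA n (-a) b).mulVec x i| ≤ ∑ j, |circA n (-a) b i j| * |x j| := by
      rw [e]
      calc |∑ j, circA n (-a) b i j * x j| ≤ ∑ j, |circA n (-a) b i j * x j| :=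
            Finset.abs_sum_le_sum_abs _ _
        _ = ∑ j, |circA n (-a) b i j| * |x j| := by simp [abs_mul]
    refine le_trans h1 ?_
    calc ∑ j, |circA n (-a) b i j| * |x j|
        ≤ ∑ j, |circA n (-a) b i j| * N := Finset.sum_le_sum fun j _ =>
          mul_le_mul_of_nonneg_left
            (le_ciSup (f := fun j => |x j|) (Finite.bddAbove_range _) j) (abs_nonneg _)
      _ = (a + ((n:ℝ) - 1) * b) * N := by rw [← Finset.sum_mul, rowsum_circA n hn1 a b ha hb i]
      _ = (((n:ℝ) - 1) * b + a) * N := by ring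
  · have hpr2 : (2:ℝ) ≤ p.toReal := by
      rw [show (2:ℝ) = (2:ℝ≥0∞).toReal from by simp]
      exact (ENNReal.toReal_le_toReal (by simp) hpi).mpr hp
    set pr := p.toReal with hprdef
    have hpr0 : 0 < pr := by linarith
    unfold vecPNorm
    rw [if_neg hpi, if_neg hpi]
    by_cases hx0 : x = 0
    · subst hx0
      rw [← hprdef]
      rw [Matrix.mulVec_zero]
      simp only [Pi.zero_apply, abs_zero, Real.zero_rpow (ne_of_gt hpr0),
        Finset.sum_const_zero]
      rw [Real.zero_rpow (by positivity : (1:ℝ)/pr ≠ 0)]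
      positivity
    · set X := (∑ j, |x j| ^ pr) ^ (1/pr) with hXdef
      have hXs : 0 < ∑ j, |x j| ^ pr := by
        obtain ⟨i, hi⟩ : ∃ i, x i ≠ 0 := by
          by_contra h
          push_neg at h
          exact hx0 (funext h)
        exact lt_of_lt_of_le (Real.rpow_pos_of_pos (abs_pos.mpr hi) pr)
          (Finset.single_le_sum (f := fun j => |x j| ^ pr)
            (fun j _ => Real.rpow_nonneg (abs_nonneg _) _) (mem_univ i))
      have hX : 0 < X := Real.rpow_pos_of_pos hXs _
      have hXp : X ^ pr = ∑ j, |x j| ^ pr := by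
        rw [hXdef, ← Real.rpow_mul hXs.le, one_div, inv_mul_cancel₀ (ne_of_gt hpr0),
          Real.rpow_one]
      set u : Fin n → ℝ := fun j => x j / X with hudef
      have hu : ∑ j, |u j| ^ pr = 1 := by
        have h1 : ∀ j, |u j| ^ pr = |x j| ^ pr / X ^ pr := by
          intro j
          rw [hudef]
          rw [abs_div, abs_of_pos hX, Real.div_rpow (abs_nonneg _) hX.le]
        rw [Finset.sum_congr rfl fun j _ => h1 j, ← Finset.sum_div, hXp]
        exact div_self (ne_of_gt hXs)
      have hmv : ∀ i, (circA n (-a) b).mulVec u i = (circA n (-a) b).mulVec x i / X := by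
        intro i
        rw [mulVec_circA, mulVec_circA, hudef]
        rw [← Finset.sum_div]
        ring
      have hkey := interp_bound n hn1 a b ha hb hcase pr hpr2 u hu
      have h2 : (∑ i, |(circA n (-a) b).mulVec u i| ^ pr) ^ (1/pr)
          = (∑ i, |(circA n (-a) b).mulVec x i| ^ pr) ^ (1/pr) / X := by
        have h3 : ∀ i, |(circA n (-a) b).mulVec u i| ^ pr
            = |(circA n (-a) b).mulVec x i| ^ pr / X ^ pr := by
          intro i
          rw [hmv i, abs_div, abs_of_pos hX, Real.div_rpow (abs_nonneg _) hX.le]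
        rw [Finset.sum_congr rfl fun i _ => h3 i, ← Finset.sum_div,
          Real.div_rpow (Finset.sum_nonneg fun i _ => Real.rpow_nonneg (abs_nonneg _) _)
            (by positivity), ← Real.rpow_mul hX.le, mul_one_div,
          div_self (ne_of_gt hpr0), Real.rpow_one]
      rw [h2] at hkey
      rw [div_le_iff₀ hX] at hkey
      calc (∑ i, |(circA n (-a) b).mulVec x i| ^ pr) ^ (1/pr)
          ≤ ((a + b) ^ (2/pr) * (a + ((n:ℝ) - 1) * b) ^ (1 - 2/pr)) * X := hkey
        _ = ((a + b) ^ (2/pr) * (((n:ℝ) - 1) * b + a) ^ (1 - 2/pr)) * X := by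
            rw [show a + ((n:ℝ) - 1) * b = ((n:ℝ) - 1) * b + a from by ring]

theorem stmt_17 (n : ℕ) (hn : 2 ≤ n) (a b : ℝ) (ha : 0 ≤ a) (hb : 0 ≤ b)
    (hcase : ((n : ℝ) - 2) * b ≤ 2 * a) (p : ℝ≥0∞) (hp : 2 ≤ p) :
    a + b ≤ matPNorm p (circA n (-a) b) ∧
      matPNorm p (circA n (-a) b) ≤
        (a + b) ^ (2 / p.toReal) * (((n : ℝ) - 1) * b + a) ^ (1 - 2 / p.toReal) := by
  have hn1 : 1 ≤ n := le_trans (by norm_num) hn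
  have hnR : (2:ℝ) ≤ (n:ℝ) := by exact_mod_cast hn
  set C := (a + b) ^ (2 / p.toReal) * (((n : ℝ) - 1) * b + a) ^ (1 - 2 / p.toReal) with hCdef
  have hC0 : 0 ≤ C := by
    apply mul_nonneg
    · exact Real.rpow_nonneg (by linarith) _
    · apply Real.rpow_nonneg
      nlinarith
  have hub : ∀ r ∈ {r : ℝ | ∃ x : Fin n → ℝ, x ≠ 0 ∧
      r = vecPNorm p ((circA n (-a) b).mulVec x) / vecPNorm p x}, r ≤ C := by
    rintro r ⟨x, hx, rfl⟩
    rw [div_le_iff₀ (vecPNorm_pos hp hx)]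
    exact main_est n hn a b ha hb hcase p hp x
  constructor
  · -- lower bound
    haveI : NeZero n := ⟨by omega⟩
    set i0 : Fin n := ⟨0, by omega⟩
    set i1 : Fin n := ⟨1, by omega⟩
    have hne : i0 ≠ i1 := by
      simp [i0, i1, Fin.ext_iff]
    set x0 : Fin n → ℝ := Pi.single i0 1 - Pi.single i1 1 with hx0def
    have hx0i0 : x0 i0 = 1 := by
      simp [hx0def, Pi.single_eq_same, Pi.single_eq_of_ne hne, Pi.single_eq_of_ne (Ne.symm hne)]
    have hx0ne : x0 ≠ 0 := by
      intro h
      have := congrFun h i0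
      rw [hx0i0] at this
      simp at this
    have hsum : ∑ j, x0 j = 0 := by
      simp [hx0def, Finset.sum_sub_distrib]
    have hAx : (circA n (-a) b).mulVec x0 = (-(a + b)) • x0 := by
      funext i
      rw [mulVec_circA, hsum]
      simp
      ring
    have hNpos : 0 < vecPNorm p x0 := vecPNorm_pos hp hx0ne
    have hmem : a + b ∈ {r : ℝ | ∃ x : Fin n → ℝ, x ≠ 0 ∧
        r = vecPNorm p ((circA n (-a) b).mulVec x) / vecPNorm p x} := by
      refine ⟨x0, hx0ne, ?_⟩
      rw [hAx, vecPNorm_smul hp, abs_neg, abs_of_nonneg (by linarith : (0:ℝ) ≤ a + b),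
        mul_div_assoc, div_self (ne_of_gt hNpos), mul_one]
    exact le_csSup ⟨C, hub⟩ hmem
  · exact Real.sSup_le hub hC0
end
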